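/- Let I be a zero-dimensional radical ideal of R = ℂ[x₁,…,xₙ], and let p, q ∈ R with q(z) ≠ 0 for every point z of the finite zero locus V(I). Then the sum of the rational function p/q over the roots of I equals the trace of the endomorphism mul(p) composed with the inverse of mul(q) on R/I: ∑_{z ∈ V(I)} p(z)/q(z) = Tr( mul(p) ∘ mul(q)⁻¹ ). -/

import Mathlib

open LinearMap

section Aux

/-- Two `ℂ`-algebra characters with the same kernel are equal. -/
theorem aux_algHom_eq_of_ker_eq {A : Type*} [CommRing A] [Algebra ℂ A]
    (φ ψ : A →ₐ[ℂ] ℂ)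
    (h : RingHom.ker φ = RingHom.ker ψ) : φ = ψ := by
  ext a
  have h1 : a - algebraMap ℂ A (ψ a) ∈ RingHom.ker ψ := by
    simp [RingHom.mem_ker, sub_eq_zero]
  rw [← h, RingHom.mem_ker] at h1
  have h2 : φ a - ψ a = 0 := by
    simpa [map_sub, AlgHom.commutes] using h1
  linear_combination h2

/-- Trace of multiplication by `v` on `ι → ℂ` is the sum of coordinates. -/
theorem aux_trace_mulLeft_pi {ι : Type*} [Fintype ι] (v : ι → ℂ) :
    LinearMap.trace ℂ (ι → ℂ) (LinearMap.mulLeft ℂ v) = ∑ i, v i := by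
  classical
  rw [LinearMap.trace_eq_matrix_trace ℂ (Pi.basisFun ℂ ι), Matrix.trace]
  refine Finset.sum_congr rfl fun i _ => ?_
  simp [Matrix.diag, LinearMap.toMatrix_apply, LinearMap.mulLeft_apply]

/-- Trace of multiplication is preserved by algebra isomorphisms. -/
theorem aux_trace_mulLeft_algEquiv {A B : Type*} [CommRing A] [Algebra ℂ A]
    [CommRing B] [Algebra ℂ B] (e : A ≃ₐ[ℂ] B) (a : A) :
    LinearMap.trace ℂ B (LinearMap.mulLeft ℂ (e a))
      = LinearMap.trace ℂ A (LinearMap.mulLeft ℂ a) := by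
  rw [← LinearMap.trace_conj' (LinearMap.mulLeft ℂ a) e.toLinearEquiv]
  congr 1
  ext x
  simp [LinearEquiv.conj_apply, LinearMap.mulLeft_apply, map_mul]

variable (A : Type*) [CommRing A] [Algebra ℂ A]

/-- The residue field at a maximal ideal of a finite-dimensional `ℂ`-algebra is `ℂ`. -/
noncomputable def auxFieldEquiv [FiniteDimensional ℂ A]
    (m : {J : Ideal A | J.IsMaximal}) : (A ⧸ m.1) ≃ₐ[ℂ] ℂ := by
  haveI : m.1.IsMaximal := m.2
  letI : Field (A ⧸ m.1) := Ideal.Quotient.field m.1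
  haveI : Algebra.IsAlgebraic ℂ (A ⧸ m.1) := Algebra.IsAlgebraic.of_finite ℂ _
  exact AlgEquiv.ofBijective (IsAlgClosed.lift : (A ⧸ m.1) →ₐ[ℂ] ℂ)
    ⟨(IsAlgClosed.lift : (A ⧸ m.1) →ₐ[ℂ] ℂ).toRingHom.injective,
     fun c => ⟨algebraMap ℂ _ c, AlgHom.commutes _ c⟩⟩

/-- The character of `A` associated to a maximal ideal. -/
noncomputable def auxChar [FiniteDimensional ℂ A]
    (m : {J : Ideal A | J.IsMaximal}) : A →ₐ[ℂ] ℂ :=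
  (auxFieldEquiv A m).toAlgHom.comp (Ideal.Quotient.mkₐ ℂ m.1)

theorem auxChar_apply [FiniteDimensional ℂ A] (m : {J : Ideal A | J.IsMaximal}) (a : A) :
    auxChar A m a = auxFieldEquiv A m (Ideal.Quotient.mk m.1 a) := rfl

theorem aux_ker_auxChar [FiniteDimensional ℂ A] (m : {J : Ideal A | J.IsMaximal}) :
    RingHom.ker (auxChar A m) = m.1 := by
  ext a
  rw [RingHom.mem_ker]
  rw [show (auxChar A m) a = auxFieldEquiv A m (Ideal.Quotient.mk m.1 a) from rfl]
  rw [map_eq_zero_iff _ (auxFieldEquiv A m).injective]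
  exact Ideal.Quotient.eq_zero_iff_mem

theorem aux_trace_eq_sum_char [FiniteDimensional ℂ A] [IsReduced A]
    [Fintype {J : Ideal A | J.IsMaximal}] (a : A) :
    LinearMap.trace ℂ A (LinearMap.mulLeft ℂ a)
      = ∑ m : {J : Ideal A | J.IsMaximal}, auxChar A m a := by
  haveI : IsArtinianRing A := IsArtinianRing.of_finite ℂ A
  have he0 : ∀ (b : A) m, IsArtinianRing.equivPi A b m = Ideal.Quotient.mk m.1 b :=
    fun b m => rfl
  let e1 : A ≃+* ({J : Ideal A | J.IsMaximal} → ℂ) :=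
    (IsArtinianRing.equivPi A).toRingEquiv.trans
      ((RingEquiv.piCongrLeft (fun m : {J : Ideal A | J.IsMaximal} => A ⧸ m.1)
        (⟨fun m => ⟨m.1, m.2⟩, fun J => ⟨J.1, J.2⟩, fun _ => rfl, fun _ => rfl⟩ :
          MaximalSpectrum A ≃ {J : Ideal A | J.IsMaximal})).trans
      (RingEquiv.piCongrRight fun m => (auxFieldEquiv A m).toRingEquiv))
  have he1 : ∀ (b : A) m, e1 b m = auxChar A m b := fun b m => by
    show (auxFieldEquiv A m) (IsArtinianRing.equivPi A b ⟨m.1, m.2⟩) = _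
    rw [he0, auxChar_apply]
  let E : A ≃ₐ[ℂ] ({J : Ideal A | J.IsMaximal} → ℂ) :=
    AlgEquiv.ofRingEquiv (f := e1) (fun c => by
      funext m
      rw [he1]
      show auxChar A m (algebraMap ℂ A c) = c
      rw [AlgHom.commutes]
      rfl)
  have : LinearMap.trace ℂ A (LinearMap.mulLeft ℂ a)
      = LinearMap.trace ℂ _ (LinearMap.mulLeft ℂ (E a)) :=
    (aux_trace_mulLeft_algEquiv E a).symm
  rw [this, aux_trace_mulLeft_pi]
  exact Finset.sum_congr rfl fun m _ => he1 a m

end Aux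

/-- For a zero-dimensional radical ideal `I` of `ℂ[x₁,…,xₙ]` and polynomials
`p, q` with `q` nonvanishing on the zero locus `V(I)`, the sum of the rational
function `p/q` over the points of `V(I)` equals the trace of
`mul(p) ∘ mul(q)⁻¹` on `R ⧸ I`. -/
theorem sum_rational_over_roots_eq_trace
    (n : ℕ) (I : Ideal (MvPolynomial (Fin n) ℂ))
    (hfd : FiniteDimensional ℂ (MvPolynomial (Fin n) ℂ ⧸ I))
    (hrad : I.IsRadical)
    (p q : MvPolynomial (Fin n) ℂ)
    (hq : ∀ z : Fin n → ℂ, (∀ g ∈ I, MvPolynomial.eval z g = 0) →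
      MvPolynomial.eval z q ≠ 0) :
    (∑ᶠ z ∈ {z : Fin n → ℂ | ∀ g ∈ I, MvPolynomial.eval z g = 0},
        MvPolynomial.eval z p / MvPolynomial.eval z q)
      = LinearMap.trace ℂ (MvPolynomial (Fin n) ℂ ⧸ I)
          ((LinearMap.mulLeft ℂ (Ideal.Quotient.mk I p) :
              Module.End ℂ (MvPolynomial (Fin n) ℂ ⧸ I)) *
            Ring.inverse
              (LinearMap.mulLeft ℂ (Ideal.Quotient.mk I q) :
                Module.End ℂ (MvPolynomial (Fin n) ℂ ⧸ I))) := by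
  classical
  haveI : IsReduced (MvPolynomial (Fin n) ℂ ⧸ I) :=
    (Ideal.isRadical_iff_quotient_reduced I).mp hrad
  haveI : IsArtinianRing (MvPolynomial (Fin n) ℂ ⧸ I) := IsArtinianRing.of_finite ℂ _
  haveI : Finite {J : Ideal (MvPolynomial (Fin n) ℂ ⧸ I) | J.IsMaximal} :=
    (IsArtinianRing.setOfPred_isMaximal_finite _).to_subtype
  cases nonempty_fintype {J : Ideal (MvPolynomial (Fin n) ℂ ⧸ I) | J.IsMaximal}
  -- the point associated to a maximal ideal
  set Φ : {J : Ideal (MvPolynomial (Fin n) ℂ ⧸ I) | J.IsMaximal} → (Fin n → ℂ) :=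
    fun m i => auxChar _ m (Ideal.Quotient.mk I (MvPolynomial.X i)) with hΦ
  have hEval : ∀ m (f : MvPolynomial (Fin n) ℂ), MvPolynomial.eval (Φ m) f
      = auxChar _ m (Ideal.Quotient.mk I f) := by
    intro m f
    have : (MvPolynomial.eval (Φ m) : MvPolynomial (Fin n) ℂ →+* ℂ)
        = ((auxChar _ m : (MvPolynomial (Fin n) ℂ ⧸ I) →+* ℂ).comp (Ideal.Quotient.mk I)) := by
      apply MvPolynomial.ringHom_ext
      · intro c
        simp only [MvPolynomial.eval_C, RingHom.comp_apply]
        rw [show (MvPolynomial.C c : MvPolynomial (Fin n) ℂ)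
            = algebraMap ℂ (MvPolynomial (Fin n) ℂ) c from rfl]
        rw [show (Ideal.Quotient.mk I) (algebraMap ℂ (MvPolynomial (Fin n) ℂ) c)
            = algebraMap ℂ (MvPolynomial (Fin n) ℂ ⧸ I) c from
          (Ideal.Quotient.mkₐ ℂ I).commutes c]
        exact ((auxChar _ m).commutes c).symm
      · intro i
        simp [hΦ]
    exact congrFun (congrArg (fun g : MvPolynomial (Fin n) ℂ →+* ℂ => (g : _ → ℂ)) this) f
  have hΦV : ∀ m, Φ m ∈ {z : Fin n → ℂ | ∀ g ∈ I, MvPolynomial.eval z g = 0} := by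
    intro m g hg
    rw [hEval]
    rw [Ideal.Quotient.eq_zero_iff_mem.mpr hg, map_zero]
  have hrange : {z : Fin n → ℂ | ∀ g ∈ I, MvPolynomial.eval z g = 0} = Set.range Φ := by
    apply Set.eq_of_subset_of_subset
    · intro z hz
      -- build the character from evaluation at z
      let φz : (MvPolynomial (Fin n) ℂ ⧸ I) →ₐ[ℂ] ℂ :=
        Ideal.Quotient.liftₐ I (MvPolynomial.aeval z)
          (fun a ha => by simpa [MvPolynomial.aeval_def] using hz a ha)
      have hsurj : Function.Surjective φz :=
        fun c => ⟨algebraMap ℂ _ c, φz.commutes c⟩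
      have hmax : (RingHom.ker φz).IsMaximal :=
        RingHom.ker_isMaximal_of_surjective _ hsurj
      set m : {J : Ideal (MvPolynomial (Fin n) ℂ ⧸ I) | J.IsMaximal} :=
        ⟨RingHom.ker φz, hmax⟩
      have hchar : auxChar _ m = φz :=
        aux_algHom_eq_of_ker_eq _ _ (by rw [aux_ker_auxChar])
      refine ⟨m, ?_⟩
      funext i
      show auxChar _ m (Ideal.Quotient.mk I (MvPolynomial.X i)) = z i
      rw [hchar]
      show (MvPolynomial.aeval z) (MvPolynomial.X i) = z i
      simp
    · rintro _ ⟨m, rfl⟩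
      exact hΦV m
  have hΦinj : Function.Injective Φ := by
    intro m m' hmm
    have hchar : auxChar _ m = auxChar _ m' := by
      have hcomp : ((auxChar _ m : (MvPolynomial (Fin n) ℂ ⧸ I) →+* ℂ).comp
            (Ideal.Quotient.mk I))
          = ((auxChar _ m' : (MvPolynomial (Fin n) ℂ ⧸ I) →+* ℂ).comp
            (Ideal.Quotient.mk I)) := by
        apply MvPolynomial.ringHom_ext
        · intro c
          simp only [RingHom.comp_apply]
          rw [show (MvPolynomial.C c : MvPolynomial (Fin n) ℂ)
              = algebraMap ℂ (MvPolynomial (Fin n) ℂ) c from rfl]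
          rw [show (Ideal.Quotient.mk I) (algebraMap ℂ (MvPolynomial (Fin n) ℂ) c)
              = algebraMap ℂ (MvPolynomial (Fin n) ℂ ⧸ I) c from
            (Ideal.Quotient.mkₐ ℂ I).commutes c]
          simp only [RingHom.coe_coe, AlgHom.commutes]
        · intro i
          exact congrFun hmm i
      ext a
      obtain ⟨f, rfl⟩ := Ideal.Quotient.mk_surjective a
      exact congrFun (congrArg (fun g : MvPolynomial (Fin n) ℂ →+* ℂ => (g : _ → ℂ)) hcomp) f
    apply Subtype.ext
    rw [← aux_ker_auxChar _ m, ← aux_ker_auxChar _ m', hchar]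
  -- q is a unit in the quotient
  have hunit : IsUnit (Ideal.Quotient.mk I q) := by
    by_contra h
    obtain ⟨m', hmax, hle⟩ := Ideal.exists_le_maximal
      (Ideal.span {Ideal.Quotient.mk I q}) (fun htop => h (Ideal.span_singleton_eq_top.mp htop))
    have hqm : Ideal.Quotient.mk I q ∈ m' := hle (Ideal.subset_span rfl)
    set m : {J : Ideal (MvPolynomial (Fin n) ℂ ⧸ I) | J.IsMaximal} := ⟨m', hmax⟩
    apply hq (Φ m) (hΦV m)
    rw [hEval]
    have hqm' : Ideal.Quotient.mk I q ∈ RingHom.ker (auxChar _ m) := by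
      rw [aux_ker_auxChar]; exact hqm
    exact RingHom.mem_ker.mp hqm'
  obtain ⟨u, huval⟩ := hunit
  -- identify the Ring.inverse
  have h1 : (LinearMap.mulLeft ℂ (Ideal.Quotient.mk I q) :
        Module.End ℂ (MvPolynomial (Fin n) ℂ ⧸ I))
      * LinearMap.mulLeft ℂ ((↑u⁻¹ : MvPolynomial (Fin n) ℂ ⧸ I)) = 1 := by
    rw [Module.End.mul_eq_comp, ← LinearMap.mulLeft_mul, ← huval, u.mul_inv]
    exact LinearMap.mulLeft_one ℂ _
  have h2 : (LinearMap.mulLeft ℂ ((↑u⁻¹ : MvPolynomial (Fin n) ℂ ⧸ I)) :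
        Module.End ℂ (MvPolynomial (Fin n) ℂ ⧸ I))
      * LinearMap.mulLeft ℂ (Ideal.Quotient.mk I q) = 1 := by
    rw [Module.End.mul_eq_comp, ← LinearMap.mulLeft_mul, ← huval, u.inv_mul]
    exact LinearMap.mulLeft_one ℂ _
  set U : (Module.End ℂ (MvPolynomial (Fin n) ℂ ⧸ I))ˣ :=
    ⟨LinearMap.mulLeft ℂ (Ideal.Quotient.mk I q),
     LinearMap.mulLeft ℂ ((↑u⁻¹ : MvPolynomial (Fin n) ℂ ⧸ I)), h1, h2⟩
  have hinv : Ring.inverse (LinearMap.mulLeft ℂ (Ideal.Quotient.mk I q) :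
        Module.End ℂ (MvPolynomial (Fin n) ℂ ⧸ I))
      = LinearMap.mulLeft ℂ ((↑u⁻¹ : MvPolynomial (Fin n) ℂ ⧸ I)) := Ring.inverse_unit U
  rw [hinv]
  have hmul : (LinearMap.mulLeft ℂ (Ideal.Quotient.mk I p) :
        Module.End ℂ (MvPolynomial (Fin n) ℂ ⧸ I))
      * LinearMap.mulLeft ℂ ((↑u⁻¹ : MvPolynomial (Fin n) ℂ ⧸ I))
      = LinearMap.mulLeft ℂ
          ((Ideal.Quotient.mk I p) * ((↑u⁻¹ : MvPolynomial (Fin n) ℂ ⧸ I))) := by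
    rw [Module.End.mul_eq_comp, ← LinearMap.mulLeft_mul]
  rw [hmul, aux_trace_eq_sum_char]
  -- compute LHS
  rw [hrange, finsum_mem_range hΦinj, finsum_eq_sum_of_fintype]
  refine Finset.sum_congr rfl fun m _ => ?_
  have hq' : auxChar _ m (Ideal.Quotient.mk I q) ≠ 0 := by
    rw [← hEval]
    exact hq (Φ m) (hΦV m)
  have hinvchar : auxChar _ m ((↑u⁻¹ : MvPolynomial (Fin n) ℂ ⧸ I))
      = (auxChar _ m (Ideal.Quotient.mk I q))⁻¹ := by
    have hone : auxChar _ m (Ideal.Quotient.mk I q)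
        * auxChar _ m ((↑u⁻¹ : MvPolynomial (Fin n) ℂ ⧸ I)) = 1 := by
      rw [← map_mul, ← huval, u.mul_inv, map_one]
    exact (inv_eq_of_mul_eq_one_right hone).symm
  rw [map_mul, hinvchar, hEval, hEval, div_eq_mul_inv]
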